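/- Let α, β, γ, δ be real numbers. On ℝ³ with standard basis e₁, e₂, e₃, let the bracket be the bilinear antisymmetric map determined by [e₁,e₂] = 0, [e₁,e₃] = α•e₁ + β•e₂, [e₂,e₃] = γ•e₁ + δ•e₂ (the Lie algebra of G₅), and let ∇ be the bilinear map ℝ³ → ℝ³ → ℝ³ determined on basis vectors by ∇_{e₁}e₁ = α•e₃, ∇_{e₂}e₁ = ((β+γ)/2)•e₃, ∇_{e₃}e₁ = -((β-γ)/2)•e₂, ∇_{e₁}e₂ = ((β+γ)/2)•e₃, ∇_{e₂}e₂ = δ•e₃, ∇_{e₃}e₂ = ((β-γ)/2)•e₁, ∇_{e₁}e₃ = α•e₁ + ((β+γ)/2)•e₂, ∇_{e₂}e₃ = ((β+γ)/2)•e₁ + δ•e₂, ∇_{e₃}e₃ = 0. Then for all X, Y, Z ∈ ℝ³, 2*g(∇_X Y, Z) = g([X,Y], Z) - g([Y,Z], X) + g([Z,X], Y), i.e. ∇ satisfies the Koszul formula characterizing the Levi-Civita connection of the left-invariant Lorentzian metric g. -/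
import Mathlib


noncomputable section

/-- The standard basis of `ℝ³`. -/
def e₁ : Fin 3 → ℝ := ![1, 0, 0]
def e₂ : Fin 3 → ℝ := ![0, 1, 0]
def e₃ : Fin 3 → ℝ := ![0, 0, 1]

/-- The Lorentzian inner product with `e₁, e₂, e₃` pseudo-orthonormal, `e₃` timelike. -/
def g (X Y : Fin 3 → ℝ) : ℝ := X 0 * Y 0 + X 1 * Y 1 - X 2 * Y 2

/-- The bilinear antisymmetric bracket of the Lie algebra of `G₅`:
`[e₁,e₂] = 0`, `[e₁,e₃] = αe₁ + βe₂`, `[e₂,e₃] = γe₁ + δe₂`. -/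
def bracket (α β γ δ : ℝ) (X Y : Fin 3 → ℝ) : Fin 3 → ℝ :=
  (X 0 * Y 1 - X 1 * Y 0) • (0 : Fin 3 → ℝ) +
  (X 0 * Y 2 - X 2 * Y 0) • (α • e₁ + β • e₂) +
  (X 1 * Y 2 - X 2 * Y 1) • (γ • e₁ + δ • e₂)

/-- The candidate Levi-Civita connection of `G₅`, extended bilinearly from its
values on the basis vectors. -/
def nabla (α β γ δ : ℝ) (X Y : Fin 3 → ℝ) : Fin 3 → ℝ :=
  (X 0 * Y 0) • (α • e₃) +
  (X 0 * Y 1) • (((β+γ)/2) • e₃) +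
  (X 0 * Y 2) • (α • e₁ + ((β+γ)/2) • e₂) +
  (X 1 * Y 0) • (((β+γ)/2) • e₃) +
  (X 1 * Y 1) • (δ • e₃) +
  (X 1 * Y 2) • (((β+γ)/2) • e₁ + δ • e₂) +
  (X 2 * Y 0) • (-((β-γ)/2) • e₂) +
  (X 2 * Y 1) • (((β-γ)/2) • e₁) +
  (X 2 * Y 2) • (0 : Fin 3 → ℝ)

/-- `∇` satisfies the Koszul formula characterizing the Levi-Civita connection
of the left-invariant Lorentzian metric `g` on `G₅`. -/
theorem G5_LeviCivita_Koszul (α β γ δ : ℝ) (X Y Z : Fin 3 → ℝ) :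
    2 * g (nabla α β γ δ X Y) Z =
      g (bracket α β γ δ X Y) Z - g (bracket α β γ δ Y Z) X + g (bracket α β γ δ Z X) Y := by
  simp [g, nabla, bracket, e₁, e₂, e₃, Matrix.cons_val_zero, Matrix.cons_val_one]
  ring

end
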